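/- There exists a unique k₀ ∈ (0, 1) such that 2E(k₀) − K(k₀) = 0; moreover 2E(k) − K(k) > 0 for k ∈ (0, k₀) and 2E(k) − K(k) < 0 for k ∈ (k₀, 1). -/

import Mathlib

open Set Real

/-- Complete elliptic integral of the first kind. -/
noncomputable def ellK (k : ℝ) : ℝ :=
  ∫ t in (0:ℝ)..(π/2), 1 / Real.sqrt (1 - k ^ 2 * sin t ^ 2)

/-- Complete elliptic integral of the second kind. -/
noncomputable def ellE (k : ℝ) : ℝ :=
  ∫ t in (0:ℝ)..(π/2), Real.sqrt (1 - k ^ 2 * sin t ^ 2)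

/-- The function `k ↦ 2E(k) − K(k)`. -/
noncomputable def Fk (k : ℝ) : ℝ := 2 * ellE k - ellK k

lemma u_pos {k : ℝ} (hk : k^2 < 1) (t : ℝ) : 0 < 1 - k ^ 2 * sin t ^ 2 := by
  nlinarith [sin_sq_le_one t, sq_nonneg (k * sin t), sq_nonneg k]

lemma cont_sqrt (k : ℝ) : Continuous fun t : ℝ => Real.sqrt (1 - k ^ 2 * sin t ^ 2) := by
  fun_prop

lemma cont_inv {k : ℝ} (hk : k^2 < 1) :
    Continuous fun t : ℝ => 1 / Real.sqrt (1 - k ^ 2 * sin t ^ 2) :=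
  continuous_const.div (cont_sqrt k) fun t => (Real.sqrt_pos.mpr (u_pos hk t)).ne'

lemma cont_g {k : ℝ} (hk : k^2 < 1) :
    Continuous fun t : ℝ =>
      2 * Real.sqrt (1 - k ^ 2 * sin t ^ 2) - 1 / Real.sqrt (1 - k ^ 2 * sin t ^ 2) :=
  ((continuous_const.mul (cont_sqrt k))).sub (cont_inv hk)

lemma Fk_eq {k : ℝ} (hk : k^2 < 1) :
    Fk k = ∫ t in (0:ℝ)..(π/2),
      (2 * Real.sqrt (1 - k ^ 2 * sin t ^ 2) - 1 / Real.sqrt (1 - k ^ 2 * sin t ^ 2)) := by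
  unfold Fk ellE ellK
  rw [intervalIntegral.integral_sub (f := fun t => 2 * Real.sqrt (1 - k ^ 2 * sin t ^ 2))
    ((continuous_const.mul (cont_sqrt k)).intervalIntegrable _ _)
    ((cont_inv hk).intervalIntegrable _ _), intervalIntegral.integral_const_mul]

lemma pointwise_lower {k₁ k₂ t : ℝ} (h0 : 0 ≤ k₁) (h12 : k₁ ≤ k₂) (h2 : k₂ < 1)
    (ht : t ∈ Icc (0:ℝ) (π/2)) :
    (k₂ ^ 2 - k₁ ^ 2) * sin t ^ 2 ≤
      (2 * Real.sqrt (1 - k₁ ^ 2 * sin t ^ 2) - 1 / Real.sqrt (1 - k₁ ^ 2 * sin t ^ 2)) -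
      (2 * Real.sqrt (1 - k₂ ^ 2 * sin t ^ 2) - 1 / Real.sqrt (1 - k₂ ^ 2 * sin t ^ 2)) := by
  have hk2 : k₂ ^ 2 < 1 := by nlinarith
  have hk1 : k₁ ^ 2 < 1 := by nlinarith
  set u₁ := 1 - k₁ ^ 2 * sin t ^ 2 with hu₁
  set u₂ := 1 - k₂ ^ 2 * sin t ^ 2 with hu₂
  have hu₂pos : 0 < u₂ := u_pos hk2 t
  have hu₁pos : 0 < u₁ := u_pos hk1 t
  have hs : 0 ≤ sin t ^ 2 := sq_nonneg _
  have h21 : u₂ ≤ u₁ := by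
    rw [hu₁, hu₂]; nlinarith [mul_le_mul_of_nonneg_right (by nlinarith : k₁^2 ≤ k₂^2) hs]
  have hu₁le : u₁ ≤ 1 := by rw [hu₁]; nlinarith [sq_nonneg (k₁ * sin t)]
  set A := Real.sqrt u₁ with hA
  set B := Real.sqrt u₂ with hB
  have hA2 : A ^ 2 = u₁ := Real.sq_sqrt hu₁pos.le
  have hB2 : B ^ 2 = u₂ := Real.sq_sqrt hu₂pos.le
  have hApos : 0 < A := Real.sqrt_pos.mpr hu₁pos
  have hBpos : 0 < B := Real.sqrt_pos.mpr hu₂pos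
  have hBA : B ≤ A := Real.sqrt_le_sqrt h21
  have hA1 : A ≤ 1 := Real.sqrt_le_one.2 hu₁le
  have hinv : 1 / A ≤ 1 / B := one_div_le_one_div_of_le hBpos hBA
  have key : A ^ 2 - B ^ 2 ≤ 2 * A - 2 * B := by
    nlinarith [mul_nonneg (sub_nonneg.2 hBA) (by linarith : (0:ℝ) ≤ 2 - A - B)]
  have : A ^ 2 - B ^ 2 = (k₂ ^ 2 - k₁ ^ 2) * sin t ^ 2 := by rw [hA2, hB2, hu₁, hu₂]; ring
  linarith

lemma Fk_anti {k₁ k₂ : ℝ} (h0 : 0 ≤ k₁) (h12 : k₁ ≤ k₂) (h2 : k₂ < 1) :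
    Fk k₂ + π/4 * (k₂ ^ 2 - k₁ ^ 2) ≤ Fk k₁ := by
  have hk2 : k₂ ^ 2 < 1 := by nlinarith
  have hk1 : k₁ ^ 2 < 1 := by nlinarith
  rw [Fk_eq hk1, Fk_eq hk2]
  have hab : (0:ℝ) ≤ π/2 := by positivity
  have key : ∫ t in (0:ℝ)..(π/2), (k₂ ^ 2 - k₁ ^ 2) * sin t ^ 2 ≤
      ∫ t in (0:ℝ)..(π/2),
        ((2 * Real.sqrt (1 - k₁ ^ 2 * sin t ^ 2) - 1 / Real.sqrt (1 - k₁ ^ 2 * sin t ^ 2)) -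
         (2 * Real.sqrt (1 - k₂ ^ 2 * sin t ^ 2) - 1 / Real.sqrt (1 - k₂ ^ 2 * sin t ^ 2))) := by
    apply intervalIntegral.integral_mono_on hab
      ((Continuous.intervalIntegrable (by fun_prop) _ _))
      (((cont_g hk1).sub (cont_g hk2)).intervalIntegrable _ _)
    exact fun t ht => pointwise_lower h0 h12 h2 ht
  rw [intervalIntegral.integral_sub ((cont_g hk1).intervalIntegrable _ _)
      ((cont_g hk2).intervalIntegrable _ _), intervalIntegral.integral_const_mul,
      integral_sin_sq] at key
  simp only [Real.sin_zero, Real.cos_zero, Real.sin_pi_div_two, Real.cos_pi_div_two] at key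
  nlinarith [key]

lemma Fk_contOn {b : ℝ} (hb0 : 0 ≤ b) (hb : b < 1) : ContinuousOn Fk (Icc 0 b) := by
  set c : ℝ := 1 - b ^ 2 with hc
  have hcpos : 0 < c := by nlinarith
  have hcont : Continuous fun p : ℝ × ℝ =>
      2 * Real.sqrt (1 - p.1 ^ 2 * sin p.2 ^ 2) -
        1 / Real.sqrt (max (1 - p.1 ^ 2 * sin p.2 ^ 2) c) := by
    have h1 : Continuous fun p : ℝ × ℝ => 1 - p.1 ^ 2 * sin p.2 ^ 2 := by fun_prop
    have h2 : Continuous fun p : ℝ × ℝ => Real.sqrt (max (1 - p.1 ^ 2 * sin p.2 ^ 2) c) :=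
      Real.continuous_sqrt.comp (h1.max continuous_const)
    refine (continuous_const.mul (Real.continuous_sqrt.comp h1)).sub
      (continuous_const.div h2 fun p => ?_)
    exact (Real.sqrt_pos.mpr (lt_max_of_lt_right hcpos)).ne'
  have hcont2 : Continuous fun k : ℝ => ∫ t in (0:ℝ)..(π/2),
      (2 * Real.sqrt (1 - k ^ 2 * sin t ^ 2) -
        1 / Real.sqrt (max (1 - k ^ 2 * sin t ^ 2) c)) := by
    exact intervalIntegral.continuous_parametric_intervalIntegral_of_continuous'
      (f := fun k t => 2 * Real.sqrt (1 - k ^ 2 * sin t ^ 2) -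
        1 / Real.sqrt (max (1 - k ^ 2 * sin t ^ 2) c)) hcont 0 (π/2)
  apply hcont2.continuousOn.congr
  intro k hk
  have hk2 : k ^ 2 < 1 := by
    rcases hk with ⟨hk0, hkb⟩; nlinarith
  rw [Fk_eq hk2]
  apply intervalIntegral.integral_congr
  intro t ht
  have : c ≤ 1 - k ^ 2 * sin t ^ 2 := by
    have := sin_sq_le_one t
    rcases hk with ⟨hk0, hkb⟩
    have : k ^ 2 ≤ b ^ 2 := by nlinarith
    nlinarith [sin_sq_le_one t]
  simp only [max_eq_left this]

lemma Fk_pos_half : 0 < Fk (1/2) := by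
  have hk2 : (1/2:ℝ) ^ 2 < 1 := by norm_num
  rw [Fk_eq hk2]
  set c0 : ℝ := 2 * Real.sqrt (3/4) - 1 / Real.sqrt (3/4) with hc0
  have hs : Real.sqrt (3/4) ^ 2 = 3/4 := Real.sq_sqrt (by norm_num)
  have hspos : 0 < Real.sqrt (3/4) := Real.sqrt_pos.mpr (by norm_num)
  have hc0pos : 0 < c0 := by
    rw [hc0, sub_pos, div_lt_iff₀ hspos]
    nlinarith
  have hlow : ∀ t ∈ Icc (0:ℝ) (π/2),
      c0 ≤ 2 * Real.sqrt (1 - (1/2:ℝ) ^ 2 * sin t ^ 2) -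
        1 / Real.sqrt (1 - (1/2:ℝ) ^ 2 * sin t ^ 2) := by
    intro t _
    have hu : (3/4:ℝ) ≤ 1 - (1/2:ℝ) ^ 2 * sin t ^ 2 := by nlinarith [sin_sq_le_one t]
    have h1 : Real.sqrt (3/4) ≤ Real.sqrt (1 - (1/2:ℝ) ^ 2 * sin t ^ 2) :=
      Real.sqrt_le_sqrt hu
    have h2 : 1 / Real.sqrt (1 - (1/2:ℝ) ^ 2 * sin t ^ 2) ≤ 1 / Real.sqrt (3/4) :=
      one_div_le_one_div_of_le hspos h1
    rw [hc0]; linarith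
  have := intervalIntegral.integral_mono_on (f := fun _ => c0) (by positivity : (0:ℝ) ≤ π/2)
    (intervalIntegrable_const (μ := MeasureTheory.volume)) ((cont_g hk2).intervalIntegrable _ _) hlow
  rw [intervalIntegral.integral_const] at this
  have hpi : 0 < π/2 := by positivity
  have h0 : (0:ℝ) < (π/2 - 0) • c0 := by
    rw [smul_eq_mul, sub_zero]
    exact mul_pos (by positivity) hc0pos
  linarith

lemma cont_comp : Continuous fun t : ℝ => 1 / Real.sqrt (((1:ℝ)/1024) ^ 2 + (π/2 - t) ^ 2) := by
  have h : Continuous fun t : ℝ => Real.sqrt (((1:ℝ)/1024) ^ 2 + (π/2 - t) ^ 2) := by fun_prop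
  exact continuous_const.div h fun t =>
    (Real.sqrt_pos.mpr (by positivity)).ne'

lemma hasDeriv_G (t : ℝ) :
    HasDerivAt (fun t : ℝ => Real.arsinh ((t - π/2) / ((1:ℝ)/1024)))
      (1 / Real.sqrt (((1:ℝ)/1024) ^ 2 + (π/2 - t) ^ 2)) t := by
  have h1 : HasDerivAt (fun t : ℝ => (t - π/2) / ((1:ℝ)/1024)) (1 / ((1:ℝ)/1024)) t := by
    simpa using ((hasDerivAt_id t).sub_const (π/2)).div_const ((1:ℝ)/1024)
  have h2 := (Real.hasDerivAt_arsinh ((t - π/2) / ((1:ℝ)/1024))).comp t h1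
  refine h2.congr_deriv ?_
  have hx : ((1:ℝ)/1024) ^ 2 + (π/2 - t) ^ 2
      = (1 + ((t - π/2) / ((1:ℝ)/1024)) ^ 2) * ((1:ℝ)/1024) ^ 2 := by
    field_simp; ring
  rw [hx, Real.sqrt_mul (by positivity) (((1:ℝ)/1024) ^ 2),
    Real.sqrt_sq (by norm_num : (0:ℝ) ≤ (1:ℝ)/1024)]
  have hpos : 0 < Real.sqrt (1 + ((t - π/2) / ((1:ℝ)/1024)) ^ 2) :=
    Real.sqrt_pos.mpr (by positivity)
  field_simp

lemma integral_comp : ∫ t in (0:ℝ)..(π/2), 1 / Real.sqrt (((1:ℝ)/1024) ^ 2 + (π/2 - t) ^ 2)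
    = Real.arsinh (512 * π) := by
  rw [intervalIntegral.integral_eq_sub_of_hasDerivAt (fun t _ => hasDeriv_G t)
    (cont_comp.intervalIntegrable _ _)]
  have : (π/2 - π/2) / ((1:ℝ)/1024) = 0 := by norm_num
  rw [this, Real.arsinh_zero]
  have : ((0:ℝ) - π/2) / ((1:ℝ)/1024) = -(512 * π) := by norm_num; ring
  rw [this, Real.arsinh_neg]
  ring

lemma pointwise_upper {t : ℝ} (ht : t ∈ Icc (0:ℝ) (π/2)) :
    2 * Real.sqrt (1 - ((1:ℝ) - 1/2^21) ^ 2 * sin t ^ 2) -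
      1 / Real.sqrt (1 - ((1:ℝ) - 1/2^21) ^ 2 * sin t ^ 2)
    ≤ 2 - 1 / Real.sqrt (((1:ℝ)/1024) ^ 2 + (π/2 - t) ^ 2) := by
  set K : ℝ := (1:ℝ) - 1/2^21 with hK
  have hK0 : 0 ≤ K := by rw [hK]; norm_num
  have hK1 : K < 1 := by rw [hK]; norm_num
  have hk2 : K ^ 2 < 1 := by nlinarith
  have hu_pos := u_pos hk2 t
  have hs0 : 0 ≤ sin t := sin_nonneg_of_nonneg_of_le_pi ht.1 (by nlinarith [pi_pos, ht.2])
  have hs1 : sin t ≤ 1 := sin_le_one t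
  have hsin : 1 - (π/2 - t) ^ 2 / 2 ≤ sin t := by
    rw [← Real.cos_pi_div_two_sub]
    exact Real.one_sub_sq_div_two_le_cos
  have hKs : K * sin t ≤ 1 := by nlinarith
  have hub : 1 - K ^ 2 * sin t ^ 2 ≤ ((1:ℝ)/1024) ^ 2 + (π/2 - t) ^ 2 := by
    have h1 : 1 - K ^ 2 * sin t ^ 2 ≤ 2 * (1 - K * sin t) := by
      nlinarith [sq_nonneg (1 - K * sin t)]
    have h2 : 2 * (1 - K * sin t) ≤ 2 * (1 - K) + 2 * (1 - sin t) := by nlinarith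
    have h3 : 2 * ((1:ℝ) - K) = ((1:ℝ)/1024) ^ 2 := by rw [hK]; norm_num
    nlinarith
  have hsqle : Real.sqrt (1 - K ^ 2 * sin t ^ 2) ≤ 1 := by
    apply Real.sqrt_le_one.2
    nlinarith [sq_nonneg (K * sin t)]
  have hinv : 1 / Real.sqrt (((1:ℝ)/1024) ^ 2 + (π/2 - t) ^ 2)
      ≤ 1 / Real.sqrt (1 - K ^ 2 * sin t ^ 2) :=
    one_div_le_one_div_of_le (Real.sqrt_pos.mpr hu_pos) (Real.sqrt_le_sqrt hub)
  have h2A : 2 * Real.sqrt (1 - K ^ 2 * sin t ^ 2) ≤ 2 := by linarith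
  exact sub_le_sub h2A hinv

lemma arsinh_gt_pi : π < Real.arsinh (512 * π) := by
  have h1 : Real.sinh π < 512 * π := by
    rw [Real.sinh_eq]
    have hexp : Real.exp π < 55 := by
      have h2 : Real.exp π < Real.exp 4 :=
        Real.exp_lt_exp.mpr (by nlinarith [pi_lt_d2])
      have h3 : Real.exp 4 = Real.exp 1 ^ 4 := by
        rw [show (4:ℝ) = ((4:ℕ):ℝ) * 1 by norm_num, Real.exp_nat_mul]
      have h4 : Real.exp 1 ^ 4 < 2.7182818286 ^ 4 := by
        apply pow_lt_pow_left₀ Real.exp_one_lt_d9 (Real.exp_pos 1).le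
        norm_num
      have h5 : (2.7182818286:ℝ) ^ 4 < 55 := by norm_num
      linarith
    have hexpneg : 0 < Real.exp (-π) := Real.exp_pos _
    nlinarith [pi_gt_three]
  calc π = Real.arsinh (Real.sinh π) := (Real.arsinh_sinh π).symm
  _ < Real.arsinh (512 * π) := Real.arsinh_lt_arsinh.mpr h1

lemma Fk_neg : Fk ((1:ℝ) - 1/2^21) < 0 := by
  have hk2 : ((1:ℝ) - 1/2^21) ^ 2 < 1 := by norm_num
  rw [Fk_eq hk2]
  have hmono := intervalIntegral.integral_mono_on (μ := MeasureTheory.volume) (by positivity : (0:ℝ) ≤ π/2)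
    (g := fun t => (2:ℝ) - 1 / Real.sqrt (((1:ℝ)/1024) ^ 2 + (π/2 - t) ^ 2))
    ((cont_g hk2).intervalIntegrable _ _)
    ((continuous_const.sub cont_comp).intervalIntegrable _ _)
    (fun t ht => pointwise_upper ht)
  have heq : ∫ t in (0:ℝ)..(π/2),
      ((2:ℝ) - 1 / Real.sqrt (((1:ℝ)/1024) ^ 2 + (π/2 - t) ^ 2))
      = π - Real.arsinh (512 * π) := by
    rw [intervalIntegral.integral_sub (intervalIntegrable_const (μ := MeasureTheory.volume))
      (cont_comp.intervalIntegrable _ _), integral_comp, intervalIntegral.integral_const]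
    rw [smul_eq_mul]
    ring
  rw [heq] at hmono
  have := arsinh_gt_pi
  linarith

theorem exists_unique_k0 :
    ∃ k₀ ∈ Ioo (0:ℝ) 1,
      2 * ellE k₀ - ellK k₀ = 0 ∧
      (∀ k ∈ Ioo (0:ℝ) 1, 2 * ellE k - ellK k = 0 → k = k₀) ∧
      (∀ k ∈ Ioo (0:ℝ) k₀, 0 < 2 * ellE k - ellK k) ∧
      (∀ k ∈ Ioo k₀ (1:ℝ), 2 * ellE k - ellK k < 0) := by
  have strict : ∀ x y : ℝ, 0 ≤ x → x < y → y < 1 → Fk y < Fk x := by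
    intro x y hx hxy hy
    have h := Fk_anti hx hxy.le hy
    have hsq : x ^ 2 < y ^ 2 := by nlinarith
    have hπ : 0 < π/4 := by positivity
    nlinarith
  have hb0 : (0:ℝ) ≤ 1 - 1/2^21 := by norm_num
  have hb1 : (1:ℝ) - 1/2^21 < 1 := by norm_num
  have hhalf : (1/2:ℝ) ≤ 1 - 1/2^21 := by norm_num
  have hsub : ContinuousOn Fk (Icc (1/2) (1 - 1/2^21)) :=
    (Fk_contOn hb0 hb1).mono (Icc_subset_Icc (by norm_num) le_rfl)
  have hivt := intermediate_value_Icc' hhalf hsub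
  have h0mem : (0:ℝ) ∈ Icc (Fk (1 - 1/2^21)) (Fk (1/2)) := ⟨Fk_neg.le, Fk_pos_half.le⟩
  obtain ⟨k₀, hk₀mem, hk₀⟩ := hivt h0mem
  have hk₀pos : (0:ℝ) < k₀ := by have := hk₀mem.1; linarith
  have hk₀lt1 : k₀ < 1 := lt_of_le_of_lt hk₀mem.2 hb1
  refine ⟨k₀, ⟨hk₀pos, hk₀lt1⟩, hk₀, ?_, ?_, ?_⟩
  · intro k hk hzero
    have hzero' : Fk k = 0 := hzero
    rcases lt_trichotomy k k₀ with h | h | h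
    · have := strict k k₀ hk.1.le h hk₀lt1
      rw [hzero', hk₀] at this; linarith
    · exact h
    · have := strict k₀ k hk₀pos.le h hk.2
      rw [hzero', hk₀] at this; linarith
  · intro k hk
    have := strict k k₀ hk.1.le hk.2 hk₀lt1
    rw [hk₀] at this
    exact this
  · intro k hk
    have := strict k₀ k hk₀pos.le hk.1 hk.2
    rw [hk₀] at this
    exact this
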